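/- For every sufficiently large N there exists a strictly convex function f : [0,N] → [0,N] such that |{(x, f(x)) : x ∈ [0,N]} ∩ ℤ²| ≫ N^{2/3}, with an absolute implied constant. -/

import Mathlib

open Set Finset

lemma rat_num_den (a q : ℕ) (hq : 0 < q) (hc : Nat.Coprime a q) :
    ((a:ℚ)/(q:ℚ)).num = a ∧ ((a:ℚ)/(q:ℚ)).den = q := by
  have h1 : (q:ℕ) ≠ 0 := hq.ne'
  have h2 : (a:ℤ).natAbs.Coprime q := by simpa using hc
  have : ((a:ℚ)/(q:ℚ)) = Rat.mk' (a:ℤ) q h1 h2 := by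
    rw [Rat.mk_eq_divInt, Rat.divInt_eq_div]
    push_cast; ring
  rw [this]
  exact ⟨rfl, rfl⟩


lemma sum_inv_sq_le' (H : ℕ) (hH : 2 ≤ H) : ∑ d ∈ Finset.Icc 2 H, (1:ℝ)/(d:ℝ)^2 ≤ 3/4 - 1/H := by
  induction H, hH using Nat.le_induction with
  | base => norm_num
  | succ n hn ih =>
      rw [Finset.sum_Icc_succ_top (by omega)]
      have h2 := ih
      have hn1 : (0:ℝ) < n := by positivity -- n ≥ 2
      have hn2 : (0:ℝ) < (n:ℝ)+1 := by positivity
      have key : (1:ℝ)/((n:ℝ)+1)^2 ≤ 1/(n:ℝ) - 1/((n:ℝ)+1) := by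
        rw [div_sub_div _ _ (ne_of_gt hn1) (ne_of_gt hn2)]
        rw [div_le_div_iff₀ (by positivity) (by positivity)]
        ring_nf
        nlinarith
      push_cast
      linarith

lemma sum_inv_sq (H : ℕ) : ∑ d ∈ Finset.Icc 2 H, (1:ℝ)/(d:ℝ)^2 ≤ 3/4 := by
  rcases le_or_gt 2 H with h | h
  · have := sum_inv_sq_le' H h
    have : (0:ℝ) < H := by positivity
    have h2 := sum_inv_sq_le' H ‹2 ≤ H›
    have : (0:ℝ) ≤ 1/(H:ℝ) := by positivity
    linarith
  · interval_cases H <;> norm_num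

-- the coprime-pair count
lemma coprime_count (H : ℕ) (hH : 8 ≤ H) :
    (H:ℝ)^2/16 ≤ ((((Finset.Icc 1 H) ×ˢ (Finset.Icc 1 H)).filter
      (fun p => p.1 < p.2 ∧ Nat.Coprime p.1 p.2)).card : ℝ) := by
  classical
  set sq := (Finset.Icc 1 H) ×ˢ (Finset.Icc 1 H) with hsq
  set C := sq.filter (fun p => Nat.Coprime p.1 p.2) with hC
  set bad := sq.filter (fun p => ¬ Nat.Coprime p.1 p.2) with hbad
  -- bad is covered by divisibility classes
  have hcover : bad ⊆ (Finset.Icc 2 H).biUnion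
      (fun d => sq.filter (fun p => d ∣ p.1 ∧ d ∣ p.2)) := by
    intro p hp
    simp only [hbad, Finset.mem_filter] at hp
    obtain ⟨hpsq, hnc⟩ := hp
    have hp1 : 1 ≤ p.1 ∧ p.1 ≤ H := by
      have := (Finset.mem_product.1 hpsq).1; simpa using this
    have hp2 : 1 ≤ p.2 ∧ p.2 ≤ H := by
      have := (Finset.mem_product.1 hpsq).2; simpa using this
    set d := Nat.gcd p.1 p.2 with hd
    have hdvd1 : d ∣ p.1 := Nat.gcd_dvd_left _ _
    have hdvd2 : d ∣ p.2 := Nat.gcd_dvd_right _ _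
    have hd2 : 2 ≤ d := by
      rcases Nat.lt_or_ge d 2 with h | h
      · interval_cases d
        · have h0 : p.1 = 0 := Nat.eq_zero_of_gcd_eq_zero_left hd.symm
          omega
        · exact absurd hd.symm hnc
      · exact h
    have hdH : d ≤ H := le_trans (Nat.le_of_dvd (by omega) hdvd1) hp1.2
    refine Finset.mem_biUnion.2 ⟨d, by simp [Finset.mem_Icc, hd2, hdH], ?_⟩
    simp [Finset.mem_filter, hpsq, hdvd1, hdvd2]
  -- card of each class
  have hclass : ∀ d ∈ Finset.Icc 2 H,
      ((sq.filter (fun p => d ∣ p.1 ∧ d ∣ p.2)).card : ℝ) ≤ (H:ℝ)^2/(d:ℝ)^2 := by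
    intro d hd
    simp only [Finset.mem_Icc] at hd
    have hdpos : 0 < d := by omega
    have : sq.filter (fun p => d ∣ p.1 ∧ d ∣ p.2)
        = ((Finset.Icc 1 H).filter (fun a => d ∣ a)) ×ˢ ((Finset.Icc 1 H).filter (fun a => d ∣ a)) := by
      rw [hsq, Finset.filter_product]
    rw [this, Finset.card_product]
    have hcard : ((Finset.Icc 1 H).filter (fun a => d ∣ a)).card = H / d := by
      have : Finset.Icc 1 H = Finset.Ioc 0 H := rfl
      rw [this]
      exact Nat.Ioc_filter_dvd_card_eq_div H d
    rw [hcard]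
    have h1 : ((H / d : ℕ) : ℝ) ≤ (H:ℝ)/(d:ℝ) := by
      exact_mod_cast Nat.cast_div_le.trans (by push_cast; exact le_refl _)
    push_cast
    calc ((H/d : ℕ):ℝ) * ((H/d : ℕ):ℝ) ≤ ((H:ℝ)/d) * ((H:ℝ)/d) := by
          apply mul_le_mul h1 h1 (by positivity) (by positivity)
      _ = (H:ℝ)^2/(d:ℝ)^2 := by ring
  -- bad card bound
  have hbadcard : (bad.card : ℝ) ≤ 3/4 * (H:ℝ)^2 := by
    have h1 : bad.card ≤ ∑ d ∈ Finset.Icc 2 H, (sq.filter (fun p => d ∣ p.1 ∧ d ∣ p.2)).card :=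
      le_trans (Finset.card_le_card hcover) (Finset.card_biUnion_le)
    calc (bad.card : ℝ) ≤ ∑ d ∈ Finset.Icc 2 H, ((sq.filter (fun p => d ∣ p.1 ∧ d ∣ p.2)).card : ℝ) := by
          exact_mod_cast h1
      _ ≤ ∑ d ∈ Finset.Icc 2 H, (H:ℝ)^2/(d:ℝ)^2 := Finset.sum_le_sum hclass
      _ = (H:ℝ)^2 * ∑ d ∈ Finset.Icc 2 H, (1:ℝ)/(d:ℝ)^2 := by
          rw [Finset.mul_sum]; apply Finset.sum_congr rfl; intros; ring
      _ ≤ (H:ℝ)^2 * (3/4) := by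
          apply mul_le_mul_of_nonneg_left (sum_inv_sq H) (by positivity)
      _ = 3/4 * (H:ℝ)^2 := by ring
  -- C card lower bound
  have hsqcard : sq.card = H^2 := by
    rw [hsq, Finset.card_product, Nat.card_Icc]
    simp only [Nat.add_sub_cancel]
    ring
  have hCbad : C.card + bad.card = H^2 := by
    rw [hC, hbad, Finset.card_filter_add_card_filter_not]
    exact hsqcard
  have hCcard : (H:ℝ)^2/4 ≤ (C.card : ℝ) := by
    have : (C.card : ℝ) + (bad.card : ℝ) = (H:ℝ)^2 := by exact_mod_cast hCbad
    linarith
  -- symmetry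
  set Vlt := sq.filter (fun p => p.1 < p.2 ∧ Nat.Coprime p.1 p.2) with hVlt
  set Vgt := sq.filter (fun p => p.2 < p.1 ∧ Nat.Coprime p.1 p.2) with hVgt
  have hswap : Vgt.card = Vlt.card := by
    have himg : Vgt = Vlt.image Prod.swap := by
      ext p
      constructor
      · intro hp
        rw [hVgt, Finset.mem_filter, Finset.mem_product] at hp
        refine Finset.mem_image.2 ⟨p.swap, ?_, p.swap_swap⟩
        rw [hVlt, Finset.mem_filter, Finset.mem_product]
        exact ⟨⟨hp.1.2, hp.1.1⟩, hp.2.1, (hp.2.2).symm⟩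
      · intro hp
        obtain ⟨q, hq, rfl⟩ := Finset.mem_image.1 hp
        rw [hVlt, Finset.mem_filter, Finset.mem_product] at hq
        rw [hVgt, Finset.mem_filter, Finset.mem_product]
        exact ⟨⟨hq.1.2, hq.1.1⟩, hq.2.1, hq.2.2.symm⟩
    rw [himg, Finset.card_image_of_injective _ Prod.swap_injective]
  have hsplit : C.card ≤ Vlt.card + Vgt.card + 1 := by
    have hsub : C ⊆ Vlt ∪ Vgt ∪ {(1,1)} := by
      intro p hp
      rw [hC, Finset.mem_filter] at hp
      rcases lt_trichotomy p.1 p.2 with h | h | h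
      · refine Finset.mem_union_left _ (Finset.mem_union_left _ ?_)
        rw [hVlt, Finset.mem_filter]
        exact ⟨hp.1, h, hp.2⟩
      · apply Finset.mem_union_right
        have h1 : p.1 = 1 := by
          have := hp.2
          rw [Nat.Coprime, h, Nat.gcd_self] at this
          omega
        have h2 : p = (1,1) := by
          have h3 : p.2 = 1 := by omega
          exact Prod.ext h1 h3
        simp [h2]
      · refine Finset.mem_union_left _ (Finset.mem_union_right _ ?_)
        rw [hVgt, Finset.mem_filter]
        exact ⟨hp.1, h, hp.2⟩
    calc C.card ≤ (Vlt ∪ Vgt ∪ {(1,1)}).card := Finset.card_le_card hsub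
      _ ≤ (Vlt ∪ Vgt).card + ({((1:ℕ),(1:ℕ))} : Finset (ℕ×ℕ)).card := Finset.card_union_le _ _
      _ ≤ Vlt.card + Vgt.card + 1 := by
          have := Finset.card_union_le Vlt Vgt
          simp only [Finset.card_singleton]
          omega
  have hV : (H:ℝ)^2/4 ≤ 2 * (Vlt.card : ℝ) + 1 := by
    have h5 : C.card ≤ Vlt.card + Vlt.card + 1 := by omega
    have h6 : (C.card : ℝ) ≤ (Vlt.card:ℝ) + (Vlt.card:ℝ) + 1 := by exact_mod_cast h5
    linarith
  have hH8 : (8:ℝ) ≤ (H:ℝ) := by exact_mod_cast hH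
  nlinarith [hV, sq_nonneg ((H:ℝ) - 8)]

lemma convexOn_affine {s : Set ℝ} (hs : Convex ℝ s) (p q : ℝ) :
    ConvexOn ℝ s (fun x => p * x + q) := by
  refine ⟨hs, fun x _ y _ a b ha hb hab => ?_⟩
  simp only [smul_eq_mul]
  have : b = 1 - a := by linarith
  subst this; apply le_of_eq; ring

lemma sup'_convexOn {ι : Type*} {s : Set ℝ} (F : Finset ι) (hF : F.Nonempty)
    (g : ι → ℝ → ℝ) (h : ∀ i ∈ F, ConvexOn ℝ s (g i)) :
    ConvexOn ℝ s (fun x => F.sup' hF (fun i => g i x)) := by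
  refine ⟨(h _ hF.choose_spec).1, fun x hx y hy a b ha hb hab => ?_⟩
  apply Finset.sup'_le
  intro i hi
  calc g i (a • x + b • y) ≤ a • g i x + b • g i y := (h i hi).2 hx hy ha hb hab
    _ ≤ a • F.sup' hF (fun j => g j x) + b • F.sup' hF (fun j => g j y) := by
        have h1 := Finset.le_sup' (fun j => g j x) hi
        have h2 := Finset.le_sup' (fun j => g j y) hi
        simp only [smul_eq_mul]
        nlinarith

lemma strictConvexOn_const_mul_sq {s : Set ℝ} (hs : Convex ℝ s) {c : ℝ} (hc : 0 < c) :
    StrictConvexOn ℝ s (fun x => c * x ^ 2) := by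
  have h := (Even.strictConvexOn_pow (even_two) two_ne_zero).subset (Set.subset_univ s) hs
  refine ⟨hs, fun x hx y hy hxy a b ha hb hab => ?_⟩
  have := h.2 hx hy hxy ha hb hab
  simp only [smul_eq_mul] at *
  nlinarith

set_option maxHeartbeats 1000000 in
lemma jarnik_core (N γ : ℝ) (M : ℕ) (w t : ℕ → ℝ)
    (hN : 0 < N) (hγ : 0 < γ)
    (hgap : ∀ k, k + 1 ≤ M → t k + γ ≤ t (k+1))
    (ht0 : γ ≤ t 0)
    (htop : t M + γ ≤ 1)
    (hw : ∀ k ≤ M, 0 < w k)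
    (hsum : ∑ i ∈ Finset.range (M+1), w i = N) :
    ∃ f : ℝ → ℝ, StrictConvexOn ℝ (Set.Icc 0 N) f ∧
      (∀ x ∈ Set.Icc (0:ℝ) N, f x ∈ Set.Icc (0:ℝ) N) ∧
      (∀ k ≤ M, f (∑ i ∈ Finset.range k, w i) = ∑ i ∈ Finset.range k, t i * w i) := by
  classical
  set a : ℝ := γ / N with ha
  have hapos : 0 < a := div_pos hγ hN
  set X : ℕ → ℝ := fun k => ∑ i ∈ Finset.range k, w i with hX
  set Y : ℕ → ℝ := fun k => ∑ i ∈ Finset.range k, t i * w i with hY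
  have hXsucc : ∀ k, X (k+1) = X k + w k := by
    intro k; simp [hX, Finset.sum_range_succ]
  have hYsucc : ∀ k, Y (k+1) = Y k + t k * w k := by
    intro k; simp [hY, Finset.sum_range_succ]
  have hX0 : X 0 = 0 := by simp [hX]
  have hY0 : Y 0 = 0 := by simp [hY]
  -- monotonicity of t
  have tmono : ∀ j k, j < k → k ≤ M → t j + γ ≤ t k := by
    intro j k hjk hkM
    induction k, hjk using Nat.le_induction with
    | base => exact hgap j hkM
    | succ k hk ih =>
        have h1 := ih (by omega)
        have h2 := hgap k (by omega)
        linarith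
  have tmono' : ∀ j k, j ≤ k → k ≤ M → t j ≤ t k := by
    intro j k hjk hkM
    rcases eq_or_lt_of_le hjk with rfl | h
    · exact le_refl _
    · linarith [tmono j k h hkM]
  have tpos : ∀ k ≤ M, γ ≤ t k := fun k hk => le_trans ht0 (tmono' 0 k (by omega) hk)
  have ttop : ∀ k ≤ M, t k ≤ 1 - γ := fun k hk => by
    have := tmono' k M hk (le_refl _); linarith
  -- X facts
  have hXmono : ∀ j k, j ≤ k → k ≤ M + 1 → X j ≤ X k := by
    intro j k hjk hkM
    rw [hX]
    apply Finset.sum_le_sum_of_subset_of_nonneg (Finset.range_subset_range.2 hjk)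
    intro i hi _
    exact le_of_lt (hw i (by simp at hi; omega))
  have hXnn : ∀ k ≤ M + 1, 0 ≤ X k := by
    intro k hk
    have := hXmono 0 k (by omega) hk
    rwa [hX0] at this
  have hXN : X (M+1) = N := hsum
  have hXleN : ∀ k ≤ M + 1, X k ≤ N := by
    intro k hk
    rw [← hXN]
    exact hXmono k (M+1) hk (le_refl _)
  have hXstrict : ∀ k ≤ M, X k < X (k+1) := by
    intro k hk
    rw [hXsucc]
    linarith [hw k hk]
  -- Y facts
  have hYnn : ∀ k ≤ M + 1, 0 ≤ Y k := by
    intro k hk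
    rw [hY]
    apply Finset.sum_nonneg
    intro i hi
    simp only [Finset.mem_range] at hi
    have hiM : i ≤ M := by omega
    have := tpos i hiM
    have := hw i hiM
    nlinarith
  have hYX : ∀ k ≤ M + 1, Y k ≤ (1 - γ) * X k := by
    intro k hk
    rw [hY, hX, Finset.mul_sum]
    apply Finset.sum_le_sum
    intro i hi
    simp only [Finset.mem_range] at hi
    have hiM : i ≤ M := by omega
    have h1 := ttop i hiM
    have h2 := hw i hiM
    nlinarith
  -- the parabolas (affine part)
  set L : ℕ → ℝ → ℝ := fun k x =>
    Y k + t k * (x - X k) + a * ((x - X k) * (x - X (k+1)) - x^2) with hL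
  have hne : (Finset.range (M+1)).Nonempty := ⟨0, by simp⟩
  set f : ℝ → ℝ := fun x => a * x^2 + (Finset.range (M+1)).sup' hne (fun k => L k x) with hf
  have hQ : ∀ k x, a * x^2 + L k x = Y k + t k * (x - X k) + a * (x - X k) * (x - X (k+1)) := by
    intro k x; rw [hL]; ring
  -- dominance claims
  have claim_up : ∀ j k, j < k → k ≤ M → Y j + t j * (X k - X j) + γ * (X k - X (j+1)) ≤ Y k := by
    intro j k hjk hkM
    induction k, hjk using Nat.le_induction with
    | base =>
        rw [hXsucc, hYsucc]
        apply le_of_eq; ring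
    | succ k hk ih =>
        have ihk := ih (by omega)
        have htk := tmono j k hk (by omega)
        have hwk := hw k (by omega)
        rw [hXsucc, hYsucc]
        nlinarith
  have claim_dn : ∀ k j, k < j → j ≤ M → Y j + t j * (X k - X j) + γ * (X j - X k) ≤ Y k := by
    intro k j hkj hjM
    induction j, hkj using Nat.le_induction with
    | base =>
        rw [hXsucc, hYsucc]
        have := hgap k hjM
        have hwk := hw k (by omega)
        nlinarith
    | succ j hj ih =>
        have ihj := ih (by omega)
        have hgj := hgap j (by omega)
        have hwj := hw j (by omega)
        have hXkj : X k ≤ X j := hXmono k j (by omega) (by omega)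
        rw [hXsucc, hYsucc]
        nlinarith
  -- node values
  have hnode : ∀ k ≤ M, f (X k) = Y k := by
    intro k hkM
    have hle : (Finset.range (M+1)).sup' hne (fun j => L j (X k)) ≤ Y k - a * (X k)^2 := by
      apply Finset.sup'_le
      intro j hj
      simp only [Finset.mem_range] at hj
      have hjM : j ≤ M := by omega
      have key : a * (X k)^2 + L j (X k) ≤ Y k := by
        rw [hQ]
        rcases lt_trichotomy j k with h | rfl | h
        · -- j < k
          have h1 := claim_up j k h hkM
          have h2 : 0 ≤ X k - X (j+1) := by
            have := hXmono (j+1) k (by omega) (by omega); linarith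
          have h3 : X k - X j ≤ N := by
            have := hXleN k (by omega); have := hXnn j (by omega); linarith
          have h4 : 0 ≤ X k - X j := by
            have := hXmono j k (by omega) (by omega); linarith
          have h5 : a * (X k - X j) ≤ γ := by
            rw [ha]; rw [div_mul_eq_mul_div, div_le_iff₀ hN]; nlinarith
          nlinarith
        · apply le_of_eq; ring_nf
        · -- k < j
          have h1 := claim_dn k j h hjM
          have h2 : 0 ≤ X j - X k := by
            have := hXmono k j (by omega) (by omega); linarith
          have h3 : X (j+1) - X k ≤ N := by
            have := hXleN (j+1) (by omega); have := hXnn k (by omega); linarith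
          have h4 : 0 ≤ X (j+1) - X k := by
            have := hXmono k (j+1) (by omega) (by omega); linarith
          have h5 : a * (X (j+1) - X k) ≤ γ := by
            rw [ha]; rw [div_mul_eq_mul_div, div_le_iff₀ hN]; nlinarith
          nlinarith
      linarith
    have hge : Y k - a * (X k)^2 ≤ (Finset.range (M+1)).sup' hne (fun j => L j (X k)) := by
      have := Finset.le_sup' (fun j => L j (X k)) (Finset.mem_range.2 (by omega : k < M + 1))
      have heq : L k (X k) = Y k - a * (X k)^2 := by rw [hL]; ring
      rw [heq] at this
      exact this
    have hfx : f (X k) = a * (X k)^2 + (Finset.range (M+1)).sup' hne (fun j => L j (X k)) := rfl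
    rw [hfx]
    linarith [le_antisymm hle hge]
  -- range bounds
  have hrange : ∀ x ∈ Set.Icc (0:ℝ) N, f x ∈ Set.Icc (0:ℝ) N := by
    intro x hx
    obtain ⟨hx0, hxN⟩ := hx
    have hfx : f x = a * x^2 + (Finset.range (M+1)).sup' hne (fun k => L k x) := rfl
    constructor
    · -- lower bound via Q 0
      have h1 : L 0 x ≤ (Finset.range (M+1)).sup' hne (fun k => L k x) :=
        Finset.le_sup' (fun k => L k x) (Finset.mem_range.2 (by omega))
      have h2 : 0 ≤ a * x^2 + L 0 x := by
        rw [hQ, hY0, hX0]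
        simp only [sub_zero, zero_add]
        have hX1 : X 1 ≤ N := hXleN 1 (by omega)
        have hX1pos : 0 < X 1 := by rw [hXsucc, hX0]; simpa using hw 0 (by omega)
        rcases le_or_gt x (X 1) with h | h
        · have haX1 : a * X 1 ≤ γ := by
            rw [ha, div_mul_eq_mul_div, div_le_iff₀ hN]; nlinarith
          have p1 : 0 ≤ (t 0 - γ) * x := mul_nonneg (by linarith) hx0
          have p2 : 0 ≤ (γ - a * X 1) * x := mul_nonneg (by linarith) hx0
          have p3 : 0 ≤ a * x * x := mul_nonneg (mul_nonneg hapos.le hx0) hx0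
          nlinarith [p1, p2, p3]
        · have p1 : 0 ≤ t 0 * x := mul_nonneg (by linarith) hx0
          have p2 : 0 ≤ a * x * (x - X 1) := mul_nonneg (mul_nonneg hapos.le hx0) (by linarith)
          linarith
      rw [hfx]; linarith
    · -- upper bound
      rw [hfx]
      have : (Finset.range (M+1)).sup' hne (fun k => L k x) ≤ N - a * x^2 := by
        apply Finset.sup'_le
        intro j hj
        simp only [Finset.mem_range] at hj
        have hjM : j ≤ M := by omega
        have key : a * x^2 + L j x ≤ N := by
          rw [hQ]
          have hYj := hYX j (by omega)
          have hXj0 := hXnn j (by omega)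
          have hXjN := hXleN j (by omega)
          have hXj10 := hXnn (j+1) (by omega)
          have hXj1N := hXleN (j+1) (by omega)
          have htj0 : 0 ≤ t j := by have := tpos j hjM; linarith
          have htj1 : t j ≤ 1 - γ := ttop j hjM
          have hlin : Y j + t j * (x - X j) ≤ (1 - γ) * N := by
            rcases le_or_gt (X j) x with h | h
            · have hγ1 : γ ≤ 1 := by
                have := tpos M (le_refl M); linarith
              nlinarith
            · nlinarith
          have hquad : a * (x - X j) * (x - X (j+1)) ≤ γ * N := by
            have b1 : -N ≤ x - X j := by linarith
            have b2 : x - X j ≤ N := by linarith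
            have b3 : -N ≤ x - X (j+1) := by linarith
            have b4 : x - X (j+1) ≤ N := by linarith
            have : (x - X j) * (x - X (j+1)) ≤ N^2 := by nlinarith
            rw [ha, div_mul_eq_mul_div, div_mul_eq_mul_div, div_le_iff₀ hN]
            nlinarith
          linarith
        linarith
      linarith
  -- strict convexity
  have hconv : StrictConvexOn ℝ (Set.Icc 0 N) f := by
    have h1 : StrictConvexOn ℝ (Set.Icc (0:ℝ) N) (fun x => a * x^2) :=
      strictConvexOn_const_mul_sq (convex_Icc 0 N) hapos
    have h2 : ConvexOn ℝ (Set.Icc (0:ℝ) N) (fun x => (Finset.range (M+1)).sup' hne (fun k => L k x)) := by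
      apply sup'_convexOn
      intro k _
      have : L k = fun x => (t k - a * (X k + X (k+1))) * x + (Y k - t k * X k + a * (X k * X (k+1))) := by
        funext x; rw [hL]; ring
      rw [this]
      exact convexOn_affine (convex_Icc 0 N) _ _
    have h3 := h1.add_convexOn h2
    have hfeq : f = (fun x => a * x^2) + (fun x => (Finset.range (M+1)).sup' hne (fun k => L k x)) := rfl
    rw [hfeq]
    exact h3
  exact ⟨f, hconv, hrange, fun k hk => hnode k hk⟩

lemma farey_family (H : ℕ) (hH8 : 8 ≤ H) : ∃ (m : ℕ) (nu de : ℕ → ℕ),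
    (H:ℝ)^2/16 ≤ (m:ℝ) ∧ 1 ≤ m ∧ m ≤ H^2 ∧
    (∀ k, k < m → 1 ≤ nu k ∧ nu k < de k ∧ de k ≤ H) ∧
    (∀ j k, j < k → k < m → (nu j : ℚ)/(de j : ℚ) < (nu k : ℚ)/(de k : ℚ)) := by
  classical
  have hVmem : ∀ p ∈ ((Finset.Icc 1 H) ×ˢ (Finset.Icc 1 H)).filter
      (fun p : ℕ × ℕ => p.1 < p.2 ∧ Nat.Coprime p.1 p.2),
      1 ≤ p.1 ∧ p.1 < p.2 ∧ p.2 ≤ H ∧ Nat.Coprime p.1 p.2 := by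
    intro p hp
    rw [Finset.mem_filter, Finset.mem_product, Finset.mem_Icc, Finset.mem_Icc] at hp
    exact ⟨hp.1.1.1, hp.2.1, hp.1.2.2, hp.2.2⟩
  set V := ((Finset.Icc 1 H) ×ˢ (Finset.Icc 1 H)).filter
      (fun p : ℕ × ℕ => p.1 < p.2 ∧ Nat.Coprime p.1 p.2) with hV
  set S : Finset ℚ := V.image (fun p => (p.1:ℚ)/(p.2:ℚ)) with hS
  have hinj : Set.InjOn (fun p : ℕ × ℕ => (p.1:ℚ)/(p.2:ℚ)) V := by
    intro p hp q hq hpq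
    obtain ⟨hp1, hp2, hp3, hp4⟩ := hVmem p (by exact_mod_cast hp)
    obtain ⟨hq1, hq2, hq3, hq4⟩ := hVmem q (by exact_mod_cast hq)
    have e1 := rat_num_den p.1 p.2 (by omega) hp4
    have e2 := rat_num_den q.1 q.2 (by omega) hq4
    simp only at hpq
    have hnum : (p.1 : ℤ) = q.1 := by rw [← e1.1, ← e2.1, hpq]
    have hden : p.2 = q.2 := by rw [← e1.2, ← e2.2, hpq]
    have : p.1 = q.1 := by exact_mod_cast hnum
    exact Prod.ext this hden
  have hcardS : S.card = V.card := Finset.card_image_of_injOn hinj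
  have hcount : (H:ℝ)^2/16 ≤ (S.card : ℝ) := by
    rw [hcardS]; exact coprime_count H hH8
  have hm1 : 1 ≤ S.card := by
    by_contra h
    push_neg at h
    have h0 : S.card = 0 := by omega
    rw [h0] at hcount
    have : (8:ℝ) ≤ (H:ℝ) := by exact_mod_cast hH8
    norm_num at hcount
    nlinarith
  have hmH2 : S.card ≤ H^2 := by
    rw [hcardS]
    have h1 : V.card ≤ ((Finset.Icc 1 H) ×ˢ (Finset.Icc 1 H)).card := Finset.card_filter_le _ _
    have h2 : ((Finset.Icc 1 H) ×ˢ (Finset.Icc 1 H)).card = H^2 := by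
      rw [Finset.card_product, Nat.card_Icc]; simp [Nat.add_sub_cancel]; ring
    omega
  -- sorted enumeration
  obtain ⟨e⟩ : Nonempty (Fin S.card ≃o (S : Set ℚ)) := ⟨S.orderIsoOfFin rfl⟩
  refine ⟨S.card, (fun k => if h : k < S.card then ((e ⟨k, h⟩ : ℚ)).num.toNat else 0),
    (fun k => if h : k < S.card then ((e ⟨k, h⟩ : ℚ)).den else 1), hcount, hm1, hmH2, ?_, ?_⟩
  · intro k hk
    simp only [dif_pos hk]
    have hmem : (e ⟨k, hk⟩ : ℚ) ∈ S := (e ⟨k, hk⟩).2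
    obtain ⟨p, hpV, hpr⟩ := Finset.mem_image.1 hmem
    try simp only at hpr
    obtain ⟨hp1, hp2, hp3, hp4⟩ := hVmem p hpV
    have e1 := rat_num_den p.1 p.2 (by omega) hp4
    have hnum : ((e ⟨k, hk⟩ : ℚ)).num = p.1 := by rw [← hpr]; exact e1.1
    have hden : ((e ⟨k, hk⟩ : ℚ)).den = p.2 := by rw [← hpr]; exact e1.2
    rw [hnum, hden]
    simp only [Int.toNat_natCast]
    omega
  · intro j k hjk hkm
    simp only [dif_pos hkm, dif_pos (lt_trans hjk hkm)]
    have hlt : (e ⟨j, lt_trans hjk hkm⟩ : ℚ) < (e ⟨k, hkm⟩ : ℚ) := by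
      have : (⟨j, lt_trans hjk hkm⟩ : Fin S.card) < ⟨k, hkm⟩ := by
        simp [Fin.lt_def]; omega
      exact_mod_cast e.lt_iff_lt.2 this
    -- rewrite each side as num/den
    have hj' := Rat.num_div_den (e ⟨j, lt_trans hjk hkm⟩ : ℚ)
    have hk' := Rat.num_div_den (e ⟨k, hkm⟩ : ℚ)
    have hjnn : 0 ≤ ((e ⟨j, lt_trans hjk hkm⟩ : ℚ)).num := by
      -- nonneg since element of S is a ratio of positives; derive from membership
      have hmem : (e ⟨j, lt_trans hjk hkm⟩ : ℚ) ∈ S := (e ⟨j, lt_trans hjk hkm⟩).2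
      obtain ⟨p, hpV, hpr⟩ := Finset.mem_image.1 hmem
      try simp only at hpr
      obtain ⟨hp1, hp2, hp3, hp4⟩ := hVmem p hpV
      have e1 := rat_num_den p.1 p.2 (by omega) hp4
      rw [← hpr, e1.1]
      positivity
    have hknn : 0 ≤ ((e ⟨k, hkm⟩ : ℚ)).num := by
      have hmem : (e ⟨k, hkm⟩ : ℚ) ∈ S := (e ⟨k, hkm⟩).2
      obtain ⟨p, hpV, hpr⟩ := Finset.mem_image.1 hmem
      try simp only at hpr
      obtain ⟨hp1, hp2, hp3, hp4⟩ := hVmem p hpV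
      have e1 := rat_num_den p.1 p.2 (by omega) hp4
      rw [← hpr, e1.1]
      positivity
    rw [show (((e ⟨j, lt_trans hjk hkm⟩ : ℚ)).num.toNat : ℚ) = (((e ⟨j, lt_trans hjk hkm⟩ : ℚ)).num : ℚ) by
        exact_mod_cast Int.toNat_of_nonneg hjnn,
      show (((e ⟨k, hkm⟩ : ℚ)).num.toNat : ℚ) = (((e ⟨k, hkm⟩ : ℚ)).num : ℚ) by
        exact_mod_cast Int.toNat_of_nonneg hknn,
      hj', hk']
    exact hlt

set_option maxHeartbeats 1600000 in
/-- Jarník's construction: for all large `N` there is a strictly convex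
`f : [0,N] → [0,N]` with `≫ N^{2/3}` integer points on its graph. -/
theorem stmt_14 :
    ∃ c : ℝ, 0 < c ∧ ∃ N₀ : ℝ, ∀ N : ℝ, N₀ ≤ N →
      ∃ f : ℝ → ℝ, StrictConvexOn ℝ (Icc 0 N) f ∧
        (∀ x ∈ Icc (0 : ℝ) N, f x ∈ Icc (0 : ℝ) N) ∧
        c * N ^ ((2 : ℝ) / 3) ≤
          ({p : ℤ × ℤ | (p.1 : ℝ) ∈ Icc (0 : ℝ) N ∧ f p.1 = (p.2 : ℝ)}.ncard : ℝ) := by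
  classical
  refine ⟨1/128, by norm_num, 1024, fun N hN0 => ?_⟩
  have hNpos : (0:ℝ) < N := by linarith
  set H : ℕ := ⌊(N/2) ^ ((1:ℝ)/3)⌋₊ with hH
  have hx0 : (0:ℝ) ≤ (N/2) ^ ((1:ℝ)/3) := Real.rpow_nonneg (by linarith) _
  have h8 : (8:ℝ) ≤ (N/2) ^ ((1:ℝ)/3) := by
    have h512 : (8:ℝ) = (512:ℝ) ^ ((1:ℝ)/3) := by
      rw [show (512:ℝ) = (8:ℝ)^(3:ℕ) by norm_num, ← Real.rpow_natCast (8:ℝ) 3,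
        ← Real.rpow_mul (by norm_num)]
      norm_num
    rw [h512]
    apply Real.rpow_le_rpow (by norm_num) (by linarith) (by norm_num)
  have hH8 : 8 ≤ H := by
    rw [hH]
    exact Nat.le_floor (by exact_mod_cast h8)
  have hHle : (H:ℝ) ≤ (N/2) ^ ((1:ℝ)/3) := Nat.floor_le hx0
  have hHge : (N/2) ^ ((1:ℝ)/3) - 1 ≤ (H:ℝ) := by
    have := Nat.lt_floor_add_one ((N/2) ^ ((1:ℝ)/3))
    rw [← hH] at this
    linarith
  have hH3 : (H:ℝ)^3 ≤ N/2 := by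
    calc (H:ℝ)^3 ≤ ((N/2) ^ ((1:ℝ)/3))^3 := by
          apply pow_le_pow_left₀ (by positivity) hHle
      _ = N/2 := by
          rw [← Real.rpow_natCast ((N/2) ^ ((1:ℝ)/3)) 3, ← Real.rpow_mul (by linarith)]
          norm_num
  have hH2 : N ^ ((2:ℝ)/3) / 8 ≤ (H:ℝ)^2 := by
    have h23 : (N/2) ^ ((2:ℝ)/3) = ((N/2) ^ ((1:ℝ)/3))^2 := by
      rw [← Real.rpow_natCast ((N/2) ^ ((1:ℝ)/3)) 2, ← Real.rpow_mul (by linarith)]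
      norm_num
    have hdiv : (N/2) ^ ((2:ℝ)/3) = N ^ ((2:ℝ)/3) / (2:ℝ) ^ ((2:ℝ)/3) :=
      Real.div_rpow (by linarith) (by norm_num) _
    have h2le : (2:ℝ) ^ ((2:ℝ)/3) ≤ 2 := by
      calc (2:ℝ) ^ ((2:ℝ)/3) ≤ 2 ^ (1:ℝ) :=
            Real.rpow_le_rpow_of_exponent_le (by norm_num) (by norm_num)
        _ = 2 := Real.rpow_one 2
    have hNpow : (0:ℝ) ≤ N ^ ((2:ℝ)/3) := Real.rpow_nonneg (by linarith) _
    have hhalf : N ^ ((2:ℝ)/3) / 2 ≤ (N/2) ^ ((2:ℝ)/3) := by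
      rw [hdiv]
      apply div_le_div_of_nonneg_left hNpow (by positivity) h2le
    have hsq : (H:ℝ) ≥ (N/2) ^ ((1:ℝ)/3) / 2 := by linarith
    have h4 : ((N/2) ^ ((1:ℝ)/3) / 2)^2 ≤ (H:ℝ)^2 := by
      apply pow_le_pow_left₀ (by positivity) hsq
    calc N ^ ((2:ℝ)/3) / 8 ≤ (N/2) ^ ((2:ℝ)/3) / 4 := by linarith
      _ = ((N/2) ^ ((1:ℝ)/3))^2 / 4 := by rw [h23]
      _ = ((N/2) ^ ((1:ℝ)/3) / 2)^2 := by ring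
      _ ≤ (H:ℝ)^2 := h4
  have hHpos : (0:ℝ) < H := by
    have : (8:ℝ) ≤ (H:ℝ) := by exact_mod_cast hH8
    linarith
  -- the Farey family
  obtain ⟨m, nu, de, hmlow, hm1, hmH2, hspec, hmono⟩ := farey_family H hH8
  -- real slopes
  set sr : ℕ → ℝ := fun k => (nu k : ℝ)/(de k : ℝ) with hsr
  have hde_pos : ∀ k, k < m → (0:ℝ) < (de k : ℝ) := by
    intro k hk
    have h := hspec k hk
    have : 0 < de k := by omega
    exact_mod_cast this
  have hde_H : ∀ k, k < m → (de k : ℝ) ≤ (H:ℝ) := by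
    intro k hk
    exact_mod_cast (hspec k hk).2.2
  have hnu_1 : ∀ k, k < m → (1:ℝ) ≤ (nu k : ℝ) := by
    intro k hk
    exact_mod_cast (hspec k hk).1
  have hnude : ∀ k, k < m → (nu k : ℝ) + 1 ≤ (de k : ℝ) := by
    intro k hk
    have h := (hspec k hk).2.1
    exact_mod_cast h
  -- slope gap in ℝ
  have hsr_gap : ∀ j k, j < k → k < m → sr j + 1/(H:ℝ)^2 ≤ sr k := by
    intro j k hjk hkm
    have hjm : j < m := lt_trans hjk hkm
    have hdj := hde_pos j hjm
    have hdk := hde_pos k hkm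
    have hdjq : (0:ℚ) < (de j : ℚ) := by exact_mod_cast hdj
    have hdkq : (0:ℚ) < (de k : ℚ) := by exact_mod_cast hdk
    have hq := hmono j k hjk hkm
    rw [div_lt_div_iff₀ hdjq hdkq] at hq
    have hBA : nu j * de k < nu k * de j := by exact_mod_cast hq
    have hBA1 : ((nu j : ℝ) * (de k : ℝ)) + 1 ≤ (nu k : ℝ) * (de j : ℝ) := by
      have : nu j * de k + 1 ≤ nu k * de j := hBA
      exact_mod_cast this
    have hsub : sr k - sr j
        = ((nu k : ℝ) * (de j:ℝ) - (nu j:ℝ) * (de k:ℝ))/((de j:ℝ)*(de k:ℝ)) := by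
      simp only [hsr]
      field_simp
    have hprod : (de j:ℝ)*(de k:ℝ) ≤ (H:ℝ)^2 := by
      have h1 := hde_H j hjm
      have h2 := hde_H k hkm
      nlinarith
    have h1 : 1/(H:ℝ)^2 ≤ ((nu k : ℝ) * (de j:ℝ) - (nu j:ℝ) * (de k:ℝ))/((de j:ℝ)*(de k:ℝ)) := by
      rw [div_le_div_iff₀ (by positivity) (by positivity)]
      nlinarith
    linarith [hsub ▸ h1]
  -- slope bounds
  have hsr_low : ∀ k, k < m → 1/(H:ℝ)^2 ≤ sr k := by
    intro k hk
    have hdk := hde_pos k hk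
    have h1 := hnu_1 k hk
    have h2 := hde_H k hk
    simp only [hsr]
    rw [div_le_div_iff₀ (by positivity) hdk]
    nlinarith
  have hsr_top : ∀ k, k < m → sr k ≤ 1 - 1/(H:ℝ) := by
    intro k hk
    have hdk := hde_pos k hk
    have h1 := hnude k hk
    have h2 := hde_H k hk
    simp only [hsr]
    have heq : (1 - 1/(H:ℝ)) * (de k:ℝ) = ((H:ℝ)-1) * (de k:ℝ) / (H:ℝ) := by
      field_simp
    rw [div_le_iff₀ hdk, heq, le_div_iff₀ hHpos]
    nlinarith
  -- build widths and slopes for jarnik_core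
  have hHr8 : (8:ℝ) ≤ (H:ℝ) := by exact_mod_cast hH8
  set γ : ℝ := 1/(H:ℝ)^2 with hγdef
  have hγpos : 0 < γ := by positivity
  set t : ℕ → ℝ := fun k => if k < m then sr k else sr (m-1) + γ with ht
  set w : ℕ → ℝ := fun k => if k < m then (de k:ℝ) else N - ∑ i ∈ Finset.range m, (de i : ℝ) with hw
  have hm1' : m - 1 < m := by omega
  have hXmN : ∑ i ∈ Finset.range m, (de i : ℝ) ≤ N/2 := by
    have h1 : ∑ i ∈ Finset.range m, (de i : ℝ) ≤ ∑ i ∈ Finset.range m, (H:ℝ) := by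
      apply Finset.sum_le_sum
      intro i hi
      exact hde_H i (Finset.mem_range.1 hi)
    have h2 : ∑ i ∈ Finset.range m, (H:ℝ) = (m:ℝ) * (H:ℝ) := by
      rw [Finset.sum_const, Finset.card_range, nsmul_eq_mul]
    have h3 : (m:ℝ) ≤ (H:ℝ)^2 := by exact_mod_cast hmH2
    have h4 : (m:ℝ) * (H:ℝ) ≤ (H:ℝ)^2 * (H:ℝ) := by nlinarith
    have h5 : (H:ℝ)^2 * (H:ℝ) = (H:ℝ)^3 := by ring
    linarith
  -- hypotheses of jarnik_core
  have hgap : ∀ k, k + 1 ≤ m → t k + γ ≤ t (k+1) := by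
    intro k hk
    rcases lt_or_eq_of_le hk with h | h
    · simp only [ht, if_pos (by omega : k < m), if_pos (by omega : k + 1 < m)]
      exact hsr_gap k (k+1) (by omega) (by omega)
    · simp only [ht, if_pos (by omega : k < m), if_neg (by omega : ¬ (k + 1 < m))]
      have : k = m - 1 := by omega
      rw [this]
  have ht0 : γ ≤ t 0 := by
    simp only [ht, if_pos (by omega : 0 < m)]
    exact hsr_low 0 (by omega)
  have htop : t m + γ ≤ 1 := by
    simp only [ht, if_neg (by omega : ¬ (m < m))]
    have h1 := hsr_top (m-1) hm1'
    have h2 : 2 * γ ≤ 1/(H:ℝ) := by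
      rw [hγdef, show 2*(1/(H:ℝ)^2) = 2/(H:ℝ)^2 from by ring,
        div_le_div_iff₀ (by positivity) hHpos]
      nlinarith
    linarith
  have hwpos : ∀ k ≤ m, 0 < w k := by
    intro k hk
    rcases lt_or_eq_of_le hk with h | h
    · simp only [hw, if_pos h]
      exact hde_pos k h
    · simp only [hw, h, if_neg (by omega : ¬ (m < m))]
      linarith
  have hsum : ∑ i ∈ Finset.range (m+1), w i = N := by
    rw [Finset.sum_range_succ]
    have h1 : ∑ i ∈ Finset.range m, w i = ∑ i ∈ Finset.range m, (de i : ℝ) := by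
      apply Finset.sum_congr rfl
      intro i hi
      simp only [hw, if_pos (Finset.mem_range.1 hi)]
    rw [h1]
    simp only [hw, if_neg (by omega : ¬ (m < m))]
    ring
  obtain ⟨f, hconv, hrangef, hnode⟩ :=
    jarnik_core N γ m w t hNpos hγpos hgap ht0 htop hwpos hsum
  -- node coordinates as integers
  have hXk : ∀ k, k ≤ m → ∑ i ∈ Finset.range k, w i = ((∑ i ∈ Finset.range k, de i : ℕ) : ℝ) := by
    intro k hk
    rw [Nat.cast_sum]
    apply Finset.sum_congr rfl
    intro i hi
    simp only [hw, if_pos (by have := Finset.mem_range.1 hi; omega : i < m)]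
  have hYk : ∀ k, k ≤ m → ∑ i ∈ Finset.range k, t i * w i = ((∑ i ∈ Finset.range k, nu i : ℕ) : ℝ) := by
    intro k hk
    rw [Nat.cast_sum]
    apply Finset.sum_congr rfl
    intro i hi
    have him : i < m := by have := Finset.mem_range.1 hi; omega
    simp only [ht, hw, if_pos him, hsr]
    rw [div_mul_cancel₀]
    exact (hde_pos i him).ne'
  -- the integer points
  refine ⟨f, hconv, hrangef, ?_⟩
  have hTfin : {p : ℤ × ℤ | (p.1 : ℝ) ∈ Icc (0 : ℝ) N ∧ f p.1 = (p.2 : ℝ)}.Finite := by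
    apply Set.Finite.of_finite_image (f := Prod.fst)
    · apply Set.Finite.subset (Set.finite_Icc (0:ℤ) ⌈N⌉₊)
      rintro z ⟨p, hp, rfl⟩
      obtain ⟨⟨h1, h2⟩, _⟩ := hp
      constructor
      · exact_mod_cast h1
      · have : (p.1 : ℝ) ≤ (⌈N⌉₊ : ℝ) := le_trans h2 (Nat.le_ceil N)
        exact_mod_cast this
    · rintro p hp q hq h1
      obtain ⟨_, hp2⟩ := hp
      obtain ⟨_, hq2⟩ := hq
      have : (p.2 : ℝ) = (q.2 : ℝ) := by rw [← hp2, ← hq2, h1]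
      have h2 : p.2 = q.2 := by exact_mod_cast this
      exact Prod.ext h1 h2
  set P : ℕ → ℤ × ℤ := fun k =>
    (((∑ i ∈ Finset.range k, de i : ℕ) : ℤ), ((∑ i ∈ Finset.range k, nu i : ℕ) : ℤ)) with hP
  have hPT : ∀ k, k ≤ m → P k ∈ {p : ℤ × ℤ | (p.1 : ℝ) ∈ Icc (0 : ℝ) N ∧ f p.1 = (p.2 : ℝ)} := by
    intro k hk
    have hc1 : (((∑ i ∈ Finset.range k, de i : ℕ) : ℤ) : ℝ) = ((∑ i ∈ Finset.range k, de i : ℕ) : ℝ) := by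
      push_cast; ring
    have hc2 : (((∑ i ∈ Finset.range k, nu i : ℕ) : ℤ) : ℝ) = ((∑ i ∈ Finset.range k, nu i : ℕ) : ℝ) := by
      push_cast; ring
    have hle : ((∑ i ∈ Finset.range k, de i : ℕ) : ℝ) ≤ N := by
      rw [← hXk k hk]
      have hsub : ∑ i ∈ Finset.range k, w i ≤ ∑ i ∈ Finset.range m, w i := by
        apply Finset.sum_le_sum_of_subset_of_nonneg (Finset.range_subset_range.2 hk)
        intro i hi _
        exact le_of_lt (hwpos i (by have := Finset.mem_range.1 hi; omega))
      have h2 : ∑ i ∈ Finset.range m, w i = ∑ i ∈ Finset.range m, (de i : ℝ) := by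
        apply Finset.sum_congr rfl
        intro i hi
        simp only [hw, if_pos (Finset.mem_range.1 hi)]
      rw [h2] at hsub
      linarith
    refine ⟨⟨?_, ?_⟩, ?_⟩
    · rw [hP]; simp only [hc1]; positivity
    · rw [hP]; simp only [hc1]; exact hle
    · rw [hP]
      simp only [hc1, hc2]
      rw [← hXk k hk, hnode k hk, hYk k hk]
  have hPinj : Set.InjOn P ↑(Finset.range (m+1)) := by
    have hmono' : ∀ j k, j < k → k ≤ m → (∑ i ∈ Finset.range j, de i) < ∑ i ∈ Finset.range k, de i := by
      intro j k hjk hkm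
      apply Finset.sum_lt_sum_of_subset (Finset.range_subset_range.2 (le_of_lt hjk))
        (Finset.mem_range.2 hjk) (by simp) ?_ (fun i _ _ => Nat.zero_le _)
      have hj := hspec j (by omega)
      omega
    intro a ha b hb hab
    simp only [Finset.coe_range, Set.mem_Iio] at ha hb
    rcases lt_trichotomy a b with h | h | h
    · exfalso
      have h1 := hmono' a b h (by omega)
      have h0 : (P a).1 = (P b).1 := by rw [hab]
      rw [hP] at h0
      simp only at h0
      have h2 : (∑ i ∈ Finset.range a, de i) = (∑ i ∈ Finset.range b, de i) := by
        exact_mod_cast h0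
      omega
    · exact h
    · exfalso
      have h1 := hmono' b a h (by omega)
      have h0 : (P a).1 = (P b).1 := by rw [hab]
      rw [hP] at h0
      simp only at h0
      have h2 : (∑ i ∈ Finset.range a, de i) = (∑ i ∈ Finset.range b, de i) := by
        exact_mod_cast h0
      omega
  have hsubset : ↑((Finset.range (m+1)).image P) ⊆
      {p : ℤ × ℤ | (p.1 : ℝ) ∈ Icc (0 : ℝ) N ∧ f p.1 = (p.2 : ℝ)} := by
    intro z hz
    simp only [Finset.coe_image, Set.mem_image, Finset.mem_coe, Finset.mem_range] at hz
    obtain ⟨k, hk, rfl⟩ := hz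
    exact hPT k (by omega)
  have hcard : ((Finset.range (m+1)).image P).card = m + 1 := by
    rw [Finset.card_image_of_injOn hPinj, Finset.card_range]
  have hncard : (m:ℝ) + 1 ≤
      ({p : ℤ × ℤ | (p.1 : ℝ) ∈ Icc (0 : ℝ) N ∧ f p.1 = (p.2 : ℝ)}.ncard : ℝ) := by
    have h1 := Set.ncard_le_ncard hsubset hTfin
    rw [Set.ncard_coe_finset, hcard] at h1
    exact_mod_cast h1
  have hfinal : (1/128 : ℝ) * N ^ ((2:ℝ)/3) ≤ (m:ℝ) + 1 := by
    have : (1/128 : ℝ) * N ^ ((2:ℝ)/3) = (N ^ ((2:ℝ)/3) / 8) / 16 := by ring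
    rw [this]
    have h1 : (N ^ ((2:ℝ)/3) / 8) / 16 ≤ (H:ℝ)^2/16 := by linarith
    linarith
  linarith
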